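/- Let m ≥ 3, α = 1/β with β = (m+√(m²−4))/2, and let (n)_U = a_N ⋯ a_1 a_0 be the U-expansion of n. Let b_0 be the last digit of the U-expansion of n+1, and set ΔP_α(n) = P_α(n+1) − P_α(n). If b_0 = 0 then a_N ⋯ a_1 is the U-expansion of n + ΔP_α(n) − 1; if b_0 ≠ 0 then a_N ⋯ a_1 is the U-expansion of ΔP_α(n) − 1. -/

import Mathlib

open scoped Classical

/-- The sequence `U` from the paper, with index shifted by one:
`U m 0 = U_{-1} = 0`, `U m 1 = U_0 = 1`, `U m (k+2) = m * U m (k+1) - U m k`. -/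
def U (m : ℕ) : ℕ → ℤ
  | 0 => 0
  | 1 => 1
  | (k + 2) => m * U m (k + 1) - U m k

/-- `Pfun α n = #{k ∈ {1,…,n} : {kα} ≤ {nα}}`. -/
noncomputable def Pfun (α : ℝ) (n : ℕ) : ℕ :=
  ((Finset.Icc 1 n).filter
    (fun k => Int.fract ((k : ℝ) * α) ≤ Int.fract ((n : ℝ) * α))).card

open Finset

lemma U_rec (m k : ℕ) : U m (k+2) = m * U m (k+1) - U m k := rfl

lemma U_pair (m : ℕ) (hm : 3 ≤ m) : ∀ k, 0 ≤ U m k ∧ U m k < U m (k+1)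
  | 0 => by norm_num [U]
  | (k+1) => by
      obtain ⟨h0, h1⟩ := U_pair m hm k
      have hm' : (3:ℤ) ≤ (m:ℤ) := by exact_mod_cast hm
      refine ⟨by linarith, ?_⟩
      rw [U_rec]
      nlinarith [mul_le_mul_of_nonneg_right hm' (le_of_lt (lt_of_le_of_lt h0 h1))]

lemma U_nonneg (m : ℕ) (hm : 3 ≤ m) (k : ℕ) : 0 ≤ U m k := (U_pair m hm k).1

lemma U_pos (m : ℕ) (hm : 3 ≤ m) (k : ℕ) : 0 < U m (k+1) :=
  lt_of_le_of_lt (U_pair m hm k).1 (U_pair m hm k).2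

lemma alphaU (m : ℕ) (α : ℝ) (hq : α^2 = m*α - 1) :
    ∀ k, α * ((U m (k+1) : ℤ) : ℝ) = ((U m k : ℤ) : ℝ) + α^(k+1)
  | 0 => by norm_num [U]
  | 1 => by
      have h2 : U m 2 = (m:ℤ) := by rw [U_rec m 0]; show (m:ℤ) * 1 - 0 = m; ring
      rw [h2]
      show α * ((m:ℤ):ℝ) = ((1:ℤ):ℝ) + α^2
      push_cast
      linarith [hq]
  | (k+2) => by
      have ih1 := alphaU m α hq k
      have ih2 := alphaU m α hq (k+1)
      have hrec : ((U m (k+3) : ℤ):ℝ) = (m:ℝ) * ((U m (k+2):ℤ):ℝ) - ((U m (k+1):ℤ):ℝ) := by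
        rw [U_rec m (k+1)]; push_cast; ring
      rw [show k+1+1 = k+2 from rfl] at ih2
      have hrec2 : ((U m (k+2) : ℤ):ℝ) = (m:ℝ) * ((U m (k+1):ℤ):ℝ) - ((U m k:ℤ):ℝ) := by
        rw [U_rec m k]; push_cast; ring
      rw [show k+2+1 = k+3 from rfl, hrec]
      linear_combination (m:ℝ) * ih2 - ih1 - α^(k+1) * hq - hrec2

lemma eps_bound (m : ℕ) (hm : 3 ≤ m) (α : ℝ) (h0 : 0 < α) (h1 : α < 1)
    (hq : α^2 = m*α - 1) (c : ℕ → ℕ) :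
    ∀ i, (∀ j, j ≤ i → (∑ k ∈ Finset.range (j+1), (c k : ℤ) * U m (k+1)) < U m (j+2)) →
      ((∑ k ∈ Finset.range (i+1), (c k : ℝ) * α^(k+1)) ≤ 1 - (1-α)*α^(i+1)) ∧
      ((∑ k ∈ Finset.range (i+1), (c k : ℤ) * U m (k+1)) < U m (i+2) - U m (i+1) →
        (∑ k ∈ Finset.range (i+1), (c k : ℝ) * α^(k+1)) ≤ 1 - α^(i+1)) := by
  intro i
  induction i with
  | zero =>
    intro hg
    have hg0 := hg 0 le_rfl
    simp only [show (0:ℕ)+1 = 1 from rfl, show (0:ℕ)+2 = 2 from rfl,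
      Finset.sum_range_one] at hg0 ⊢
    have hU1 : U m 1 = 1 := rfl
    have hU2 : U m 2 = (m:ℤ) := by rw [U_rec m 0]; show (m:ℤ) * 1 - 0 = m; ring
    rw [hU1, hU2, mul_one] at hg0
    constructor
    · have hc : (c 0 : ℝ) ≤ (m:ℝ) - 1 := by
        have : (c 0 : ℤ) ≤ (m:ℤ) - 1 := by omega
        exact_mod_cast this
      have hp := mul_le_mul_of_nonneg_right hc h0.le
      rw [pow_one]
      linarith [hq, hp]
    · intro hcon
      rw [hU1, hU2, mul_one] at hcon
      have hc : (c 0 : ℝ) ≤ (m:ℝ) - 2 := by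
        have : (c 0 : ℤ) ≤ (m:ℤ) - 2 := by omega
        exact_mod_cast this
      have hp := mul_le_mul_of_nonneg_right hc h0.le
      have haa : (0:ℝ) ≤ α * (1 - α) := mul_nonneg h0.le (by linarith)
      rw [pow_one]
      linarith [hq, hp, haa]
  | succ i ih =>
    intro hg
    obtain ⟨IH1, IH2⟩ := ih (fun j hj => hg j (Nat.le_succ_of_le hj))
    have hx12 : α^(i+2) = α^(i+1) * α := pow_succ α (i+1)
    have hx1n : (0:ℝ) ≤ α^(i+1) := pow_nonneg h0.le _
    have hx2n : (0:ℝ) ≤ α^(i+2) := pow_nonneg h0.le _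
    have hUp : (0:ℤ) < U m (i+2) := U_pos m hm (i+1)
    have hUp1 : (0:ℤ) < U m (i+1) := U_pos m hm i
    have hsum_nn : (0:ℤ) ≤ ∑ k ∈ Finset.range (i+1), (c k:ℤ) * U m (k+1) :=
      Finset.sum_nonneg (fun k _ => mul_nonneg (Int.natCast_nonneg _) (U_nonneg m hm _))
    have hgs := hg (i+1) le_rfl
    rw [show i+1+1 = i+2 from rfl, show i+1+2 = i+3 from rfl, Finset.sum_range_succ,
      U_rec m (i+1)] at hgs
    -- hgs : Σ_{range(i+1)} + c(i+1)*U(i+2) < m*U(i+2) - U(i+1)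
    have hcm : (c (i+1) : ℤ) < m := by
      have h' : (c (i+1):ℤ) * U m (i+2) < (m:ℤ) * U m (i+2) := by linarith
      exact lt_of_mul_lt_mul_right h' hUp.le
    constructor
    · rw [show i+1+1 = i+2 from rfl, Finset.sum_range_succ]
      by_cases hc2 : (c (i+1) : ℤ) ≤ (m:ℤ) - 2
      · have hcr : (c (i+1):ℝ) ≤ (m:ℝ) - 2 := by exact_mod_cast hc2
        have e : (1-α)*α^(i+1) = ((m:ℝ)-2)*α^(i+2) + (1-α)*α^(i+2) := by
          rw [hx12]; linear_combination α^(i+1) * hq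
        have hp := mul_le_mul_of_nonneg_right hcr hx2n
        linarith [IH1, hp, e]
      · have hceq : (c (i+1):ℤ) = (m:ℤ) - 1 := by omega
        have hcr : (c (i+1):ℝ) = (m:ℝ) - 1 := by exact_mod_cast hceq
        have h2 : (∑ k ∈ Finset.range (i+1), (c k:ℤ)*U m (k+1)) < U m (i+2) - U m (i+1) := by
          rw [hceq] at hgs; linarith
        have hT := IH2 h2
        have e : α^(i+1) = ((m:ℝ)-1)*α^(i+2) + (1-α)*α^(i+2) := by
          rw [hx12]; linear_combination α^(i+1) * hq
        rw [hcr]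
        linarith [hT, e]
    · intro hcon
      rw [show i+1+1 = i+2 from rfl, Finset.sum_range_succ] at hcon ⊢
      rw [show i+1+2 = i+3 from rfl, U_rec m (i+1)] at hcon
      -- hcon : Σ + c(i+1)*U(i+2) < (m*U(i+2) - U(i+1)) - U(i+2)
      have hc2 : (c (i+1):ℤ) ≤ (m:ℤ) - 2 := by
        have h' : (c (i+1):ℤ) * U m (i+2) < ((m:ℤ)-1) * U m (i+2) := by linarith
        have := lt_of_mul_lt_mul_right h' hUp.le
        omega
      have haa : (0:ℝ) ≤ (α - α^2) * α^(i+1) :=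
        mul_nonneg (by nlinarith [mul_nonneg h0.le (show (0:ℝ) ≤ 1 - α by linarith)]) hx1n
      by_cases hc3 : (c (i+1):ℤ) ≤ (m:ℤ) - 3
      · have hcr : (c (i+1):ℝ) ≤ (m:ℝ) - 3 := by exact_mod_cast hc3
        have e : (1-α)*α^(i+1) = ((m:ℝ)-3)*α^(i+2) + α^(i+2) + (α - α^2)*α^(i+1) := by
          rw [hx12]; linear_combination α^(i+1) * hq
        have hp := mul_le_mul_of_nonneg_right hcr hx2n
        linarith [IH1, hp, e, haa]
      · have hceq : (c (i+1):ℤ) = (m:ℤ) - 2 := by omega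
        have hcr : (c (i+1):ℝ) = (m:ℝ) - 2 := by exact_mod_cast hceq
        have h2 : (∑ k ∈ Finset.range (i+1), (c k:ℤ)*U m (k+1)) < U m (i+2) - U m (i+1) := by
          rw [hceq] at hcon; linarith
        have hT := IH2 h2
        have e : α^(i+1) = ((m:ℝ)-2)*α^(i+2) + α^(i+2) + (α-α^2)*α^(i+1) := by
          rw [hx12]; linear_combination α^(i+1) * hq
        rw [hcr]
        linarith [hT, e, haa]

lemma sum_shift (m : ℕ) (α : ℝ) (hq : α^2 = m*α - 1) (c : ℕ → ℕ) (L : ℕ) :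
    α * (∑ k ∈ Finset.range (L+1), (c k:ℝ) * ((U m (k+1) : ℤ):ℝ)) =
      (∑ k ∈ Finset.range (L+1), (c k:ℝ) * ((U m k : ℤ):ℝ)) +
      ∑ k ∈ Finset.range (L+1), (c k:ℝ) * α^(k+1) := by
  rw [Finset.mul_sum, ← Finset.sum_add_distrib]
  refine Finset.sum_congr rfl fun k _ => ?_
  linear_combination (c k : ℝ) * (alphaU m α hq k)

lemma cast_sum_U (m : ℕ) (c : ℕ → ℕ) (g : ℕ → ℕ) (L : ℕ) :
    ((∑ k ∈ Finset.range (L+1), (c k:ℤ) * U m (g k) : ℤ):ℝ) =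
      ∑ k ∈ Finset.range (L+1), (c k:ℝ) * ((U m (g k) : ℤ):ℝ) := by
  push_cast
  rfl

lemma lowpart_lt (m : ℕ) (hm : 3 ≤ m) (α : ℝ) (h0 : 0 < α) (h1 : α < 1)
    (hq : α^2 = m*α - 1) (c : ℕ → ℕ) (i : ℕ)
    (hg : ∀ j, j ≤ i → (∑ k ∈ Finset.range (j+1), (c k:ℤ) * U m (k+1)) < U m (j+2)) :
    (∑ k ∈ Finset.range (i+1), (c k:ℤ) * U m k) < U m (i+1) := by
  by_cases hall : ∀ k, k ≤ i → c k = 0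
  · have hz : (∑ k ∈ Finset.range (i+1), (c k:ℤ) * U m k) = 0 :=
      Finset.sum_eq_zero fun k hk => by
        rw [hall k (Nat.lt_succ_iff.mp (Finset.mem_range.mp hk))]; simp
    rw [hz]; exact U_pos m hm i
  · push_neg at hall
    obtain ⟨k0, hk0le, hk0⟩ := hall
    have hid := sum_shift m α hq c i
    have her : α^(i+1) ≤ ∑ k ∈ Finset.range (i+1), (c k:ℝ) * α^(k+1) := by
      have t3 : (c k0:ℝ) * α^(k0+1) ≤ ∑ k ∈ Finset.range (i+1), (c k:ℝ) * α^(k+1) :=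
        Finset.single_le_sum (f := fun k => (c k:ℝ) * α^(k+1))
          (fun k _ => mul_nonneg (Nat.cast_nonneg _) (pow_nonneg h0.le _))
          (Finset.mem_range.mpr (by omega))
      have t2 : α^(k0+1) ≤ (c k0:ℝ) * α^(k0+1) :=
        le_mul_of_one_le_left (pow_nonneg h0.le _)
          (by exact_mod_cast Nat.one_le_iff_ne_zero.mpr hk0)
      have t1 : α^(i+1) ≤ α^(k0+1) := pow_le_pow_of_le_one h0.le h1.le (by omega)
      linarith
    have hlt : (∑ k ∈ Finset.range (i+1), (c k:ℝ) * ((U m (k+1):ℤ):ℝ)) < ((U m (i+2):ℤ):ℝ) := by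
      rw [← cast_sum_U m c (fun k => k+1) i]
      exact_mod_cast hg i le_rfl
    have hαU := alphaU m α hq (i+1)
    rw [show i+1+1 = i+2 from rfl] at hαU
    have h12 : α^(i+2) ≤ α^(i+1) := pow_le_pow_of_le_one h0.le h1.le (by omega)
    have hmul := mul_lt_mul_of_pos_left hlt h0
    have hSr : (∑ k ∈ Finset.range (i+1), (c k:ℝ) * ((U m k:ℤ):ℝ)) < ((U m (i+1):ℤ):ℝ) := by
      linarith
    have := (cast_sum_U m c (fun k => k) i) ▸ hSr
    exact_mod_cast this

lemma shifted_floor (m : ℕ) (hm : 3 ≤ m) (α : ℝ) (h0 : 0 < α) (h1 : α < 1)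
    (hq : α^2 = m*α - 1) (c : ℕ → ℕ) (L : ℕ)
    (hg : ∀ j, j ≤ L → (∑ k ∈ Finset.range (j+1), (c k:ℤ) * U m (k+1)) < U m (j+2))
    (hpos : 1 ≤ ∑ k ∈ Finset.range (L+1), (c k:ℤ) * U m (k+1)) :
    (∑ k ∈ Finset.range (L+1), (c k:ℤ) * U m k) =
      ⌊((∑ k ∈ Finset.range (L+1), (c k:ℤ) * U m (k+1) : ℤ):ℝ) * α⌋ := by
  have hex : ∃ k0, k0 ≤ L ∧ c k0 ≠ 0 := by
    by_contra h
    push_neg at h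
    have hz : (∑ k ∈ Finset.range (L+1), (c k:ℤ) * U m (k+1)) = 0 :=
      Finset.sum_eq_zero fun k hk => by
        rw [h k (Nat.lt_succ_iff.mp (Finset.mem_range.mp hk))]; simp
    omega
  obtain ⟨k0, hk0le, hk0⟩ := hex
  have hid := sum_shift m α hq c L
  have herlo : 0 < ∑ k ∈ Finset.range (L+1), (c k:ℝ) * α^(k+1) := by
    have t3 : (c k0:ℝ) * α^(k0+1) ≤ ∑ k ∈ Finset.range (L+1), (c k:ℝ) * α^(k+1) :=
      Finset.single_le_sum (f := fun k => (c k:ℝ) * α^(k+1))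
        (fun k _ => mul_nonneg (Nat.cast_nonneg _) (pow_nonneg h0.le _))
        (Finset.mem_range.mpr (by omega))
    have t2 : 0 < (c k0:ℝ) * α^(k0+1) :=
      mul_pos (by exact_mod_cast Nat.pos_of_ne_zero hk0) (pow_pos h0 _)
    linarith
  have herhi : (∑ k ∈ Finset.range (L+1), (c k:ℝ) * α^(k+1)) < 1 := by
    have := (eps_bound m hm α h0 h1 hq c L hg).1
    have hp : 0 < (1-α) * α^(L+1) := mul_pos (by linarith) (pow_pos h0 _)
    linarith
  symm
  rw [Int.floor_eq_iff]
  rw [cast_sum_U m c (fun k => k+1) L]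
  constructor
  · rw [cast_sum_U m c (fun k => k) L]
    nlinarith [hid]
  · rw [cast_sum_U m c (fun k => k) L]
    nlinarith [hid]

lemma ite_fract (x y : ℝ) :
    (if Int.fract x ≤ Int.fract (x + y) then (1:ℤ) else 0) = 1 - (⌊x+y⌋ - ⌊x⌋ - ⌊y⌋) := by
  have hfy := Int.fract_nonneg y
  have gy := Int.fract_lt_one y
  have gx := Int.fract_lt_one x
  have hfx := Int.fract_nonneg x
  have hfxy := Int.fract_nonneg (x+y)
  have gxy := Int.fract_lt_one (x+y)
  have hd : Int.fract x + Int.fract y = Int.fract (x+y) + ((⌊x+y⌋ - ⌊x⌋ - ⌊y⌋ : ℤ):ℝ) := by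
    simp only [Int.fract]
    push_cast
    ring
  have h01 : ⌊x+y⌋ - ⌊x⌋ - ⌊y⌋ = 0 ∨ ⌊x+y⌋ - ⌊x⌋ - ⌊y⌋ = 1 := by
    have l : (-1:ℝ) < ((⌊x+y⌋ - ⌊x⌋ - ⌊y⌋ : ℤ):ℝ) := by linarith
    have u : ((⌊x+y⌋ - ⌊x⌋ - ⌊y⌋ : ℤ):ℝ) < 2 := by linarith
    have l' : (-1:ℤ) < ⌊x+y⌋ - ⌊x⌋ - ⌊y⌋ := by exact_mod_cast l
    have u' : ⌊x+y⌋ - ⌊x⌋ - ⌊y⌋ < (2:ℤ) := by exact_mod_cast u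
    omega
  rcases h01 with h | h
  · rw [h] at hd ⊢
    simp only [Int.cast_zero, add_zero] at hd
    rw [if_pos (by linarith)]
    norm_num
  · rw [h] at hd ⊢
    simp only [Int.cast_one] at hd
    rw [if_neg (by push_neg; linarith)]
    norm_num

lemma sum_Icc_one (f : ℕ → ℤ) (hf : f 0 = 0) (n : ℕ) :
    ∑ k ∈ Finset.Icc 1 n, f k = ∑ k ∈ Finset.range (n+1), f k := by
  rw [Finset.sum_range_succ', hf, add_zero, ← Finset.Ico_add_one_right_eq_Icc,
    Finset.sum_Ico_eq_sum_range]
  simp [add_comm]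

lemma Pfun_formula (α : ℝ) (n : ℕ) :
    (Pfun α n : ℤ) = n - (n+1) * ⌊(n:ℝ)*α⌋ + 2 * ∑ k ∈ Finset.range (n+1), ⌊(k:ℝ)*α⌋ := by
  have h1 : (Pfun α n : ℤ) = ∑ k ∈ Finset.Icc 1 n,
      (if Int.fract (((k:ℕ):ℝ)*α) ≤ Int.fract ((n:ℝ)*α) then (1:ℤ) else 0) := by
    have hset : (do let a ← Finset.Icc 1 n; pure ((a:ℕ):ℝ)) =
        (Finset.Icc 1 n).image (fun a : ℕ => (a:ℝ)) := Finset.sup_singleton_apply _ _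
    have h1' : Pfun α n = ∑ k ∈ Finset.Icc 1 n,
        (if Int.fract (((k:ℕ):ℝ)*α) ≤ Int.fract ((n:ℝ)*α) then (1:ℕ) else 0) := by
      unfold Pfun
      rw [hset, Finset.filter_image,
        Finset.card_image_of_injective _ Nat.cast_injective, Finset.card_filter]
    rw [h1', Nat.cast_sum]
    refine Finset.sum_congr rfl fun k _ => ?_
    split_ifs <;> simp
  rw [h1]
  have h2 : ∀ k ∈ Finset.Icc 1 n, (if Int.fract (((k:ℕ):ℝ)*α) ≤ Int.fract ((n:ℝ)*α) then (1:ℤ) else 0)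
      = (1 - ⌊(n:ℝ)*α⌋) + (⌊(k:ℝ)*α⌋ + ⌊((n-k:ℕ):ℝ)*α⌋) := by
    intro k hk
    obtain ⟨hk1, hk2⟩ := Finset.mem_Icc.mp hk
    have hnk : ((n-k:ℕ):ℝ) = (n:ℝ) - (k:ℝ) := by
      push_cast [Nat.cast_sub hk2]; ring
    have hxy : (k:ℝ)*α + ((n-k:ℕ):ℝ)*α = (n:ℝ)*α := by rw [hnk]; ring
    have := ite_fract ((k:ℝ)*α) (((n-k:ℕ):ℝ)*α)
    rw [hxy] at this
    rw [this]; ring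
  rw [Finset.sum_congr rfl h2, Finset.sum_add_distrib, Finset.sum_add_distrib,
    Finset.sum_const, Nat.card_Icc]
  have e2 : ∑ k ∈ Finset.Icc 1 n, ⌊(k:ℝ)*α⌋ = ∑ k ∈ Finset.range (n+1), ⌊(k:ℝ)*α⌋ :=
    sum_Icc_one _ (by norm_num) n
  have e3 : ∑ k ∈ Finset.Icc 1 n, ⌊((n-k:ℕ):ℝ)*α⌋
      = (∑ k ∈ Finset.range (n+1), ⌊(k:ℝ)*α⌋) - ⌊(n:ℝ)*α⌋ := by
    rw [← Finset.Ico_add_one_right_eq_Icc, Finset.sum_Ico_eq_sum_range]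
    have hcongr : ∀ j ∈ Finset.range (n+1-1), ⌊((n-(1+j):ℕ):ℝ)*α⌋ = (fun t : ℕ => ⌊(t:ℝ)*α⌋) (n-1-j) := by
      intro j hj
      have : n-(1+j) = n-1-j := by omega
      rw [this]
    rw [Finset.sum_congr rfl hcongr, show n+1-1 = n from rfl,
      Finset.sum_range_reflect (fun t : ℕ => ⌊(t:ℝ)*α⌋) n]
    have := Finset.sum_range_succ (fun t : ℕ => ⌊(t:ℝ)*α⌋) n
    rw [this]
    ring
  rw [e2, e3]
  simp only [nsmul_eq_mul, Nat.add_sub_cancel]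
  push_cast
  ring

theorem stmt_19 (m : ℕ) (hm : 3 ≤ m) (β α : ℝ)
    (hβ : β = (m + Real.sqrt ((m : ℝ) ^ 2 - 4)) / 2) (hα : α = 1 / β)
    (n : ℕ) (hn : 1 ≤ n) (N M : ℕ) (a b : ℕ → ℕ)
    -- `a N ⋯ a 0` is the U-expansion of `n`
    (hsuma : (n : ℤ) = ∑ k ∈ Finset.range (N + 1), (a k : ℤ) * U m (k + 1))
    (hleada : a N ≠ 0)
    (hgreedya : ∀ i ≤ N,
      ∑ k ∈ Finset.range (i + 1), (a k : ℤ) * U m (k + 1) < U m (i + 2))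
    -- `b M ⋯ b 0` is the U-expansion of `n + 1`
    (hsumb : ((n : ℤ) + 1) = ∑ k ∈ Finset.range (M + 1), (b k : ℤ) * U m (k + 1))
    (hleadb : b M ≠ 0)
    (hgreedyb : ∀ i ≤ M,
      ∑ k ∈ Finset.range (i + 1), (b k : ℤ) * U m (k + 1) < U m (i + 2)) :
    (∀ i ≤ N, ∑ k ∈ Finset.Icc 1 i, (a k : ℤ) * U m k < U m (i + 1)) ∧
    (b 0 = 0 →
      (n : ℤ) + ((Pfun α (n + 1) : ℤ) - (Pfun α n : ℤ)) - 1 =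
        ∑ k ∈ Finset.Icc 1 N, (a k : ℤ) * U m k) ∧
    (b 0 ≠ 0 →
      ((Pfun α (n + 1) : ℤ) - (Pfun α n : ℤ)) - 1 =
        ∑ k ∈ Finset.Icc 1 N, (a k : ℤ) * U m k) := by
  -- basic facts about α
  have hm3 : (3:ℝ) ≤ (m:ℝ) := by exact_mod_cast hm
  have hs4 : (0:ℝ) ≤ (m:ℝ)^2 - 4 := by nlinarith
  have hsq := Real.sq_sqrt hs4
  have hsnn := Real.sqrt_nonneg ((m:ℝ)^2 - 4)
  have hβ1 : 1 < β := by rw [hβ]; linarith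
  have hβ0 : 0 < β := by linarith
  have hβq : β^2 = m*β - 1 := by rw [hβ]; linear_combination (1/4) * hsq
  have hα0 : 0 < α := by rw [hα]; positivity
  have hα1 : α < 1 := by rw [hα, div_lt_one hβ0]; linarith
  have hq : α^2 = (m:ℝ)*α - 1 := by
    rw [hα]
    field_simp
    linear_combination hβq
  -- expansions give floors
  have hna : (∑ k ∈ Finset.range (N+1), (a k:ℤ) * U m (k+1)) = (n:ℤ) := hsuma.symm
  have hnb : (∑ k ∈ Finset.range (M+1), (b k:ℤ) * U m (k+1)) = (n:ℤ) + 1 := hsumb.symm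
  have hposa : 1 ≤ ∑ k ∈ Finset.range (N+1), (a k:ℤ) * U m (k+1) := by
    rw [hna]; exact_mod_cast hn
  have hposb : 1 ≤ ∑ k ∈ Finset.range (M+1), (b k:ℤ) * U m (k+1) := by
    rw [hnb]; have : (0:ℤ) ≤ (n:ℤ) := Int.natCast_nonneg n; linarith
  have hfa := shifted_floor m hm α hα0 hα1 hq a N hgreedya hposa
  rw [hna] at hfa
  have hfb := shifted_floor m hm α hα0 hα1 hq b M hgreedyb hposb
  rw [hnb] at hfb
  push_cast at hfa hfb
  -- Icc/range conversions
  have hUa0 : (a 0:ℤ) * U m 0 = 0 := by rw [show U m 0 = 0 from rfl]; ring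
  have hIcc : ∑ k ∈ Finset.Icc 1 N, (a k:ℤ) * U m k
      = ∑ k ∈ Finset.range (N+1), (a k:ℤ) * U m k :=
    sum_Icc_one (fun k => (a k:ℤ) * U m k) hUa0 N
  -- fract values as digit sums
  have hida := sum_shift m α hq a N
  have hnra : (∑ k ∈ Finset.range (N+1), (a k:ℝ) * ((U m (k+1):ℤ):ℝ)) = (n:ℝ) := by
    rw [← cast_sum_U m a (fun k => k+1) N, hna]; push_cast; ring
  have hsra : (∑ k ∈ Finset.range (N+1), (a k:ℝ) * ((U m k:ℤ):ℝ)) = ((⌊(n:ℝ)*α⌋:ℤ):ℝ) := by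
    rw [← cast_sum_U m a (fun k => k) N, hfa]
  have hea : Int.fract ((n:ℝ)*α) = ∑ k ∈ Finset.range (N+1), (a k:ℝ) * α^(k+1) := by
    rw [← Int.self_sub_floor]
    rw [hnra, hsra] at hida
    linarith
  have hidb := sum_shift m α hq b M
  have hnrb : (∑ k ∈ Finset.range (M+1), (b k:ℝ) * ((U m (k+1):ℤ):ℝ)) = (n:ℝ)+1 := by
    rw [← cast_sum_U m b (fun k => k+1) M, hnb]; push_cast; ring
  have hsrb : (∑ k ∈ Finset.range (M+1), (b k:ℝ) * ((U m k:ℤ):ℝ)) = ((⌊((n:ℝ)+1)*α⌋:ℤ):ℝ) := by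
    rw [← cast_sum_U m b (fun k => k) M, hfb]
  have heb : Int.fract (((n:ℝ)+1)*α) = ∑ k ∈ Finset.range (M+1), (b k:ℝ) * α^(k+1) := by
    rw [← Int.self_sub_floor]
    rw [hnrb, hsrb] at hidb
    linarith
  -- fract bounds
  have hfrA0 := Int.fract_nonneg ((n:ℝ)*α)
  have hfrA1 := Int.fract_lt_one ((n:ℝ)*α)
  have hfrB0 := Int.fract_nonneg (((n:ℝ)+1)*α)
  have hfrB1 := Int.fract_lt_one (((n:ℝ)+1)*α)
  have hrel : ((⌊((n:ℝ)+1)*α⌋ : ℤ):ℝ) - ((⌊(n:ℝ)*α⌋:ℤ):ℝ)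
      = α + Int.fract ((n:ℝ)*α) - Int.fract (((n:ℝ)+1)*α) := by
    have e1 := Int.self_sub_floor ((n:ℝ)*α)
    have e2 := Int.self_sub_floor (((n:ℝ)+1)*α)
    have hba : ((n:ℝ)+1)*α = (n:ℝ)*α + α := by ring
    linarith [e1, e2, hba]
  -- the ΔP formula
  have hPn := Pfun_formula α n
  have hPn1 := Pfun_formula α (n+1)
  rw [Finset.sum_range_succ] at hPn1
  push_cast at hPn1
  -- hPn1 : (Pfun α (n+1) : ℤ) = (n+1) - (n+2)*⌊((n:ℝ)+1)*α⌋ + 2*(Σ_{range(n+1)} + ⌊((n:ℝ)+1)*α⌋)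
  refine ⟨?_, ?_, ?_⟩
  · intro i hi
    rw [sum_Icc_one (fun k => (a k:ℤ) * U m k) hUa0 i]
    exact lowpart_lt m hm α hα0 hα1 hq a i (fun j hj => hgreedya j (le_trans hj hi))
  · -- b 0 = 0 : carry case
    intro hb0
    -- shifted b-string is admissible
    obtain ⟨M', rfl⟩ : ∃ M', M = M' + 1 := by
      cases M with
      | zero => exact absurd hb0 hleadb
      | succ M' => exact ⟨M', rfl⟩
    have hg' : ∀ j, j ≤ M' → (∑ k ∈ Finset.range (j+1), (b (k+1):ℤ) * U m (k+1)) < U m (j+2) := by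
      intro j hj
      have h := lowpart_lt m hm α hα0 hα1 hq b (j+1) (fun j2 hj2 => hgreedyb j2 (by omega))
      rw [show j+1+1 = j+2 from rfl] at h
      rw [Finset.sum_range_succ'] at h
      simpa [show U m 0 = 0 from rfl] using h
    have hbound := (eps_bound m hm α hα0 hα1 hq (fun k => b (k+1)) M' hg').1
    have hTnn : (0:ℝ) ≤ ∑ k ∈ Finset.range (M'+1), (b (k+1):ℝ) * α^(k+1) :=
      Finset.sum_nonneg fun k _ => mul_nonneg (Nat.cast_nonneg _) (pow_nonneg hα0.le _)
    have hebs : Int.fract (((n:ℝ)+1)*α)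
        = α * ∑ k ∈ Finset.range (M'+1), (b (k+1):ℝ) * α^(k+1) := by
      rw [heb, Finset.sum_range_succ', hb0]
      push_cast
      rw [Finset.mul_sum]
      rw [Finset.sum_congr rfl (fun (k : ℕ) _ =>
        show (b (k+1):ℝ) * α^(k+1+1) = α * ((b (k+1):ℝ) * α^(k+1)) by rw [pow_succ]; ring)]
      ring
    have hεb : Int.fract (((n:ℝ)+1)*α) < α := by
      rw [hebs]
      have hT1 : (∑ k ∈ Finset.range (M'+1), (b (k+1):ℝ) * α^(k+1)) < 1 := by
        have hp : 0 < (1-α) * α^(M'+1) := mul_pos (by linarith) (pow_pos hα0 _)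
        linarith
      nlinarith
    -- carry: ⌊B⌋ = ⌊A⌋ + 1
    have hcarry : ⌊((n:ℝ)+1)*α⌋ = ⌊(n:ℝ)*α⌋ + 1 := by
      have l : (0:ℝ) < ((⌊((n:ℝ)+1)*α⌋:ℤ):ℝ) - ((⌊(n:ℝ)*α⌋:ℤ):ℝ) := by linarith
      have u : ((⌊((n:ℝ)+1)*α⌋:ℤ):ℝ) - ((⌊(n:ℝ)*α⌋:ℤ):ℝ) < 2 := by linarith
      have l' : (0:ℤ) < ⌊((n:ℝ)+1)*α⌋ - ⌊(n:ℝ)*α⌋ := by exact_mod_cast l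
      have u' : ⌊((n:ℝ)+1)*α⌋ - ⌊(n:ℝ)*α⌋ < (2:ℤ) := by exact_mod_cast u
      omega
    rw [hIcc, hfa]
    rw [hcarry] at hPn1
    linarith [hPn, hPn1]
  · -- b 0 ≠ 0 : no carry
    intro hb0
    have h1b : (1:ℝ) ≤ (b 0:ℝ) := by exact_mod_cast Nat.one_le_iff_ne_zero.mpr hb0
    have hεb : α ≤ Int.fract (((n:ℝ)+1)*α) := by
      rw [heb]
      have t3 : (b 0:ℝ) * α^(0+1) ≤ ∑ k ∈ Finset.range (M+1), (b k:ℝ) * α^(k+1) :=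
        Finset.single_le_sum (f := fun k => (b k:ℝ) * α^(k+1))
          (fun k _ => mul_nonneg (Nat.cast_nonneg _) (pow_nonneg hα0.le _))
          (Finset.mem_range.mpr (by omega))
      have t4 : (b 0:ℝ) * α ≤ ∑ k ∈ Finset.range (M+1), (b k:ℝ) * α^(k+1) := by
        simpa using t3
      have t5 : α ≤ (b 0:ℝ) * α := le_mul_of_one_le_left hα0.le h1b
      linarith [t4, t5]
    have hnoc : ⌊((n:ℝ)+1)*α⌋ = ⌊(n:ℝ)*α⌋ := by
      have l : (-1:ℝ) < ((⌊((n:ℝ)+1)*α⌋:ℤ):ℝ) - ((⌊(n:ℝ)*α⌋:ℤ):ℝ) := by linarith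
      have u : ((⌊((n:ℝ)+1)*α⌋:ℤ):ℝ) - ((⌊(n:ℝ)*α⌋:ℤ):ℝ) < 1 := by linarith
      have l' : (-1:ℤ) < ⌊((n:ℝ)+1)*α⌋ - ⌊(n:ℝ)*α⌋ := by exact_mod_cast l
      have u' : ⌊((n:ℝ)+1)*α⌋ - ⌊(n:ℝ)*α⌋ < (1:ℤ) := by exact_mod_cast u
      omega
    rw [hIcc, hfa]
    rw [hnoc] at hPn1
    linarith [hPn, hPn1]
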